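/- Let G be a simplicial group and x ∈ NG_1 a Moore cycle, i.e. d_1(x) = 1 (and d_0(x) = 1). Then F_{(0)(1)}(x,x) = [s_0 x, s_1 x]·[s_1 x, s_1 x] = [s_0 x, s_1 x] is a Moore cycle in NG_2, i.e. d_0, d_1 and d_2 all kill [s_0 x, s_1 x]. -/

import Mathlib

/-- A simplicial group: groups `G n` with face maps `d n i : G (n+1) →* G n`
and degeneracies `s n i : G n →* G (n+1)` satisfying the simplicial identities
(asserted in the meaningful index ranges). -/
structure SGrp where
  G : ℕ → Type
  grp : ∀ n, Group (G n)
  d : (n : ℕ) → ℕ → (G (n+1) →* G n)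
  s : (n : ℕ) → ℕ → (G n →* G (n+1))
  dd : ∀ n i j, i < j → j ≤ n + 2 → ∀ x,
    d n i (d (n+1) j x) = d n (j-1) (d (n+1) i x)
  ds_lt : ∀ n i j, i < j → j ≤ n + 1 → ∀ x,
    d (n+1) i (s (n+1) j x) = s n (j-1) (d n i x)
  ds_eq : ∀ n j, j ≤ n → ∀ x, d n j (s n j x) = x
  ds_succ : ∀ n j, j ≤ n → ∀ x, d n (j+1) (s n j x) = x
  ds_gt : ∀ n i j, j + 1 < i → i ≤ n + 2 → ∀ x,
    d (n+1) i (s (n+1) j x) = s n j (d n (i-1) x)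
  ss : ∀ n i j, i ≤ j → j ≤ n → ∀ x,
    s (n+1) i (s n j x) = s (n+1) (j+1) (s n i x)

attribute [instance] SGrp.grp

/-- Moore complex: `NG 0 = G 0`, `NG (n+1) = ⋂_{i ≤ n} ker (d_i)`. -/
def SGrp.NG (X : SGrp) : (n : ℕ) → Subgroup (X.G n)
  | 0 => ⊤
  | (n+1) => ⨅ i ∈ Finset.range (n+1), (X.d n i).ker

/-- Transport along an equality of dimensions. -/
def SGrp.castHom (X : SGrp) {a b : ℕ} (h : a = b) : X.G a →* X.G b where
  toFun x := h ▸ x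
  map_one' := by subst h; rfl
  map_mul' x y := by subst h; rfl

/-- Composite degeneracy `s_α = s_{i_l} ⋯ s_{i_1}` for `α = [i_l, …, i_1]`
(head applied last). -/
def SGrp.sComp (X : SGrp) : (m : ℕ) → (α : List ℕ) → (X.G m →* X.G (m + α.length))
  | _, [] => MonoidHom.id _
  | m, i :: rest => (X.s (m + rest.length) i).comp (X.sComp m rest)

/-- `s_α : G_{n-#α} →* G_n` for `α ∈ S(n)` (the trivial hom if lengths mismatch). -/
def SGrp.sMapN (X : SGrp) (n : ℕ) (α : List ℕ) : X.G (n - α.length) →* X.G n :=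
  if h : n - α.length + α.length = n then
    (X.castHom h).comp (X.sComp (n - α.length) α) else 1

/-- `p_j(z) = z ⬝ (s_j d_j z)⁻¹` on `G (n+1)`. -/
def SGrp.p (X : SGrp) (n j : ℕ) (z : X.G (n+1)) : X.G (n+1) :=
  z * (X.s n j (X.d n j z))⁻¹

/-- `pComp n j = p_j ∘ ⋯ ∘ p_0` on `G (n+1)`. -/
def SGrp.pComp (X : SGrp) (n : ℕ) : ℕ → X.G (n+1) → X.G (n+1)
  | 0 => X.p n 0
  | (j+1) => fun z => X.p n (j+1) (X.pComp n j z)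

/-- `pComp1 n l = p_l ∘ ⋯ ∘ p_1` on `G (n+1)` (identity for `l = 0`). -/
def SGrp.pComp1 (X : SGrp) (n : ℕ) : ℕ → X.G (n+1) → X.G (n+1)
  | 0 => id
  | (j+1) => fun z => X.p n (j+1) (X.pComp1 n j z)

/-- The ordering of `S(n)` from the paper: `α < β` iff comparing from the
smallest indices (the reversed lists), either the first difference has the
index of `α` larger, or `α`'s indices (from the small end) form a proper
prefix of `β`'s. -/
def Slt (α β : List ℕ) : Prop := List.Lex (· > ·) α.reverse β.reverse

/-- `α` represents a nonidentity element of `S(N)`: a nonempty strictly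
decreasing tuple of indices `< N`. -/
def SIdx (N : ℕ) (α : List ℕ) : Prop :=
  α ≠ [] ∧ α.Chain' (· > ·) ∧ α.length ≤ N ∧ ∀ i ∈ α, i < N

open scoped commutatorElement

/-- if `x ∈ NG_1` is a Moore cycle (`d₀x = d₁x = 1`), then
`F_{(0)(1)}(x,x) = [s₀x, s₁x]·[s₁x, s₁x] = [s₀x, s₁x]` is a Moore cycle in
`NG_2`: `d₀, d₁, d₂` all kill it. -/
theorem stmt12 (X : SGrp) (x : X.G 1)
    (hx0 : X.d 0 0 x = 1) (hx1 : X.d 0 1 x = 1) :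
    let F : X.G 2 := ⁅X.s 1 0 x, X.s 1 1 x⁆ * ⁅X.s 1 1 x, X.s 1 1 x⁆
    F = ⁅X.s 1 0 x, X.s 1 1 x⁆ ∧
    X.d 1 0 F = 1 ∧ X.d 1 1 F = 1 ∧ X.d 1 2 F = 1 := by
  intro F
  have h00 : X.d 1 0 (X.s 1 0 x) = x := X.ds_eq 1 0 (by omega) x
  have h01 : X.d 1 0 (X.s 1 1 x) = 1 := by
    have := X.ds_lt 0 0 1 (by omega) (by omega) x
    simp only [this, hx0, map_one]
  have h10 : X.d 1 1 (X.s 1 0 x) = x := X.ds_succ 1 0 (by omega) x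
  have h11 : X.d 1 1 (X.s 1 1 x) = x := X.ds_eq 1 1 (by omega) x
  have h20 : X.d 1 2 (X.s 1 0 x) = 1 := by
    have := X.ds_gt 0 2 0 (by omega) (by omega) x
    simp only [this, hx1, map_one]
  have h21 : X.d 1 2 (X.s 1 1 x) = x := X.ds_succ 1 1 (by omega) x
  have hF : F = ⁅X.s 1 0 x, X.s 1 1 x⁆ := by
    simp [F, commutatorElement_self]
  refine ⟨hF, ?_, ?_, ?_⟩ <;>
    simp [hF, commutatorElement_def, map_mul, map_inv, h00, h01, h10, h11, h20, h21]
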